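/- arXiv:1206.6304 — 5 statements merged into one kernel-verified Lean document; each statement's English description precedes it below -/
import Mathlib

section
/- (Shift property of the FRFT, key step of Appendix A.) Let α ∈ (0, π/2) and let R : ℝ → ℂ be Lebesgue integrable. Define the fractional power spectral density S : ℝ → ℂ by S(v) = ∫_ℝ R(t)·K_α(t,v) dt. Then for all s, u ∈ ℝ, ∫_ℝ R(t − s)·K_α(t,u) dt = exp(i·((s²/2)·sin α·cos α − u·s·sin α)) · S(u − s·cos α). -/
open MeasureTheory Real Complex

/-- The fractional Fourier transform (FRFT) kernel
`K_α(t,u) = √((1 − i·cot α)/(2π)) · exp(i·(u²/2)·cot α) · exp(−i·t·u·csc α + i·(t²/2)·cot α)`,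
where the square root is the principal complex square root (`z ^ (1/2)` via `cpow`). -/
noncomputable def frftKernel (α t u : ℝ) : ℂ :=
  (((1 : ℂ) - Complex.I * ((Real.cos α / Real.sin α : ℝ) : ℂ)) / (2 * (Real.pi : ℂ))) ^ ((1 : ℂ)/2) *
    Complex.exp (Complex.I * ((u : ℂ)^2 / 2) * ((Real.cos α / Real.sin α : ℝ) : ℂ)) *
    Complex.exp (-(Complex.I * (t : ℂ) * (u : ℂ) * (((Real.sin α : ℝ) : ℂ))⁻¹)
      + Complex.I * ((t : ℂ)^2 / 2) * ((Real.cos α / Real.sin α : ℝ) : ℂ))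

lemma frft_kernel_shift (α : ℝ) (hs : Real.sin α ≠ 0) (s u t : ℝ) :
    frftKernel α (t + s) u =
      Complex.exp (Complex.I * (((s : ℂ)^2 / 2) * ((Real.sin α : ℝ) : ℂ) * ((Real.cos α : ℝ) : ℂ)
          - (u : ℂ) * (s : ℂ) * ((Real.sin α : ℝ) : ℂ))) *
        frftKernel α t (u - s * Real.cos α) := by
  have hsc : ((Real.sin α : ℝ) : ℂ) ≠ 0 := by exact_mod_cast hs
  have pyth : ((Real.sin α : ℝ) : ℂ)^2 + ((Real.cos α : ℝ) : ℂ)^2 = 1 := by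
    exact_mod_cast Real.sin_sq_add_cos_sq α
  have aux : ∀ (C a b p a' b' : ℂ), a + b = p + (a' + b') →
      C * Complex.exp a * Complex.exp b = Complex.exp p * (C * Complex.exp a' * Complex.exp b') := by
    intro C a b p a' b' h
    rw [mul_assoc, ← Complex.exp_add, h, mul_assoc, ← Complex.exp_add, Complex.exp_add]
    ring
  unfold frftKernel
  apply aux
  have hsc' : Complex.sin (α : ℂ) ≠ 0 := by
    rw [← Complex.ofReal_sin]; exact hsc
  have pyth' : Complex.sin (α : ℂ) ^ 2 + Complex.cos (α : ℂ) ^ 2 = 1 :=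
    Complex.sin_sq_add_cos_sq _
  have hv : Complex.sin (α : ℂ) * (Complex.sin (α : ℂ))⁻¹ = 1 := mul_inv_cancel₀ hsc'
  push_cast
  linear_combination
    (-(Complex.I) * ((u : ℂ) * (s : ℂ) - Complex.cos (α : ℂ) * (s : ℂ) ^ 2 / 2) *
        Complex.sin (α : ℂ)) * hv +
    (Complex.I * ((u : ℂ) * (s : ℂ) - Complex.cos (α : ℂ) * (s : ℂ) ^ 2 / 2) *
        (Complex.sin (α : ℂ))⁻¹) * pyth'

/-- Shift property of the FRFT (key step of Appendix A): if `S` is the fractional power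
spectral density of an integrable `R`, then the FRFT of the shifted function `t ↦ R(t − s)`
equals `exp(i·((s²/2)·sin α·cos α − u·s·sin α)) · S(u − s·cos α)`. -/
theorem frft_shift (α : ℝ) (hα : α ∈ Set.Ioo 0 (Real.pi / 2)) (R : ℝ → ℂ)
    (hR : Integrable R) (S : ℝ → ℂ)
    (hS : ∀ v : ℝ, S v = ∫ t : ℝ, R t * frftKernel α t v) :
    ∀ s u : ℝ,
      (∫ t : ℝ, R (t - s) * frftKernel α t u) =
        Complex.exp (Complex.I * (((s : ℂ)^2 / 2) * ((Real.sin α : ℝ) : ℂ) * ((Real.cos α : ℝ) : ℂ)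
          - (u : ℂ) * (s : ℂ) * ((Real.sin α : ℝ) : ℂ))) * S (u - s * Real.cos α) := by
  intro s u
  have hs : Real.sin α ≠ 0 :=
    ne_of_gt (Real.sin_pos_of_pos_of_lt_pi hα.1 (lt_trans hα.2 (by linarith [Real.pi_pos])))
  have h1 : (∫ t : ℝ, R (t - s) * frftKernel α t u)
      = ∫ t : ℝ, R t * frftKernel α (t + s) u := by
    rw [← integral_add_right_eq_self (fun t => R (t - s) * frftKernel α t u) s]
    simp
  rw [h1]
  simp only [frft_kernel_shift α hs s u]
  rw [hS]
  rw [← integral_const_mul]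
  congr 1
  ext t
  ring
end

section
/- (Appendix A, probabilistic form.) Let (Ω, P) be a probability space, α ∈ (0, π/2), and let z : ℝ → Ω → ℂ be a jointly measurable stochastic process whose autocorrelation is stationary: there is an integrable function R : ℝ → ℂ with E[z(t)·conj(z(s))] = R(t − s) for all t, s. Define S(v) = ∫_ℝ R(t)·K_α(t,v) dt. Fix s, u₁ ∈ ℝ and assume (t,ω) ↦ z(t)(ω)·conj(z(s)(ω))·K_α(t,u₁) is integrable on ℝ × Ω and that t ↦ z(t)(ω)·K_α(t,u₁) is integrable for almost every ω. Then the cross-correlation between the FRFT output and an input sample satisfies E[(∫_ℝ z(t)·K_α(t,u₁) dt) · conj(z(s))] = exp(i·((s²/2)·sin α·cos α − u₁·s·sin α)) · S(u₁ − s·cos α). -/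
open MeasureTheory Real Complex

lemma frftKernel_shift (α : ℝ) (hsin : Real.sin α ≠ 0) (t s u₁ : ℝ) :
    frftKernel α (t + s) u₁
      = Complex.exp (Complex.I * (((s : ℂ)^2 / 2) * ((Real.sin α : ℝ) : ℂ) * ((Real.cos α : ℝ) : ℂ)
        - (u₁ : ℂ) * (s : ℂ) * ((Real.sin α : ℝ) : ℂ)))
        * frftKernel α t (u₁ - s * Real.cos α) := by
  have hs : Complex.sin (α : ℂ) ≠ 0 := by
    rw [← Complex.ofReal_sin]; exact Complex.ofReal_ne_zero.mpr hsin
  have hinv : (Complex.sin (α : ℂ))⁻¹ * Complex.sin (α : ℂ) = 1 := inv_mul_cancel₀ hs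
  have hpyth : (Complex.sin (α : ℂ))^2 + (Complex.cos (α : ℂ))^2 = 1 :=
    Complex.sin_sq_add_cos_sq _
  unfold frftKernel
  rw [mul_assoc, ← Complex.exp_add]
  conv_rhs => rw [mul_left_comm, mul_assoc, ← Complex.exp_add, ← Complex.exp_add]
  congr 2
  push_cast
  linear_combination
    (Complex.I * ((s:ℂ)^2 * Complex.cos (α:ℂ) / 2 - (u₁:ℂ) * (s:ℂ)) * Complex.sin (α:ℂ)) * hinv
    + (Complex.I * ((u₁:ℂ) * (s:ℂ) - (s:ℂ)^2 * Complex.cos (α:ℂ) / 2) * (Complex.sin (α:ℂ))⁻¹) * hpyth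

/-- Appendix A, probabilistic form: for a process whose autocorrelation is stationary,
`E[z(t)·conj(z(s))] = R(t − s)`, the cross-correlation between the FRFT output at `u₁` and the
input sample at `s` equals `exp(i·((s²/2)·sin α·cos α − u₁·s·sin α)) · S(u₁ − s·cos α)`, where
`S` is the fractional power spectral density of `R`. -/
theorem frft_output_crosscorrelation {Ω : Type*} [MeasurableSpace Ω] (P : Measure Ω)
    [IsProbabilityMeasure P] (α : ℝ) (hα : α ∈ Set.Ioo 0 (Real.pi / 2))
    (z : ℝ → Ω → ℂ) (hmeas : Measurable (Function.uncurry z))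
    (R : ℝ → ℂ) (hR : Integrable R)
    (hcorr : ∀ t s : ℝ, (∫ ω, z t ω * (starRingEnd ℂ) (z s ω) ∂P) = R (t - s))
    (S : ℝ → ℂ) (hS : ∀ v : ℝ, S v = ∫ t : ℝ, R t * frftKernel α t v)
    (s u₁ : ℝ)
    (hint : Integrable (fun p : ℝ × Ω =>
      z p.1 p.2 * (starRingEnd ℂ) (z s p.2) * frftKernel α p.1 u₁) (volume.prod P))
    (hae : ∀ᵐ ω ∂P, Integrable (fun t : ℝ => z t ω * frftKernel α t u₁)) :
    (∫ ω, (∫ t : ℝ, z t ω * frftKernel α t u₁) * (starRingEnd ℂ) (z s ω) ∂P) =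
      Complex.exp (Complex.I * (((s : ℂ)^2 / 2) * ((Real.sin α : ℝ) : ℂ) * ((Real.cos α : ℝ) : ℂ)
        - (u₁ : ℂ) * (s : ℂ) * ((Real.sin α : ℝ) : ℂ))) * S (u₁ - s * Real.cos α) := by
  
  have hsin : Real.sin α ≠ 0 := by
    have h1 : 0 < α := hα.1
    have h2 : α < Real.pi := lt_trans hα.2 (by linarith [Real.pi_pos])
    exact ne_of_gt (Real.sin_pos_of_pos_of_lt_pi h1 h2)
  have h1 : (∫ ω, (∫ t : ℝ, z t ω * frftKernel α t u₁) * (starRingEnd ℂ) (z s ω) ∂P)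
      = ∫ ω, ∫ t : ℝ, z t ω * (starRingEnd ℂ) (z s ω) * frftKernel α t u₁ ∂volume ∂P := by
    refine integral_congr_ae (Filter.Eventually.of_forall fun ω => ?_)
    simp only
    rw [← integral_mul_const]
    congr 1; ext t; ring
  rw [h1, ← integral_integral_swap hint]
  have h2 : ∀ t : ℝ, (∫ ω, z t ω * (starRingEnd ℂ) (z s ω) * frftKernel α t u₁ ∂P)
      = R (t - s) * frftKernel α t u₁ := by
    intro t
    rw [integral_mul_const, hcorr]
  simp only [h2]
  have h3 : (∫ t : ℝ, R (t - s) * frftKernel α t u₁)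
      = ∫ t : ℝ, R t * frftKernel α (t + s) u₁ := by
    rw [← integral_sub_right_eq_self (fun τ => R τ * frftKernel α (τ + s) u₁) s]
    simp
  rw [h3]
  simp only [frftKernel_shift α hsin _ s u₁, hS]
  rw [← integral_const_mul]
  congr 1; ext t; ring
end

section
/- (FRFT inversion formula.) Let α ∈ (0, π/2) and let f : ℝ → ℂ be continuous and Lebesgue integrable. Define its fractional Fourier transform F : ℝ → ℂ by F(u) = ∫_ℝ f(t)·K_α(t,u) dt, and assume F is Lebesgue integrable. Then for every t ∈ ℝ, ∫_ℝ F(u)·K_{−α}(t,u) du = f(t). -/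
open MeasureTheory Real Complex FourierTransform

/-- Generalized FRFT kernel with explicit cotangent `c` and sine `s`. -/
noncomputable def frftK (c s : ℝ) (t u : ℝ) : ℂ :=
  (((1 : ℂ) - Complex.I * ((c : ℝ) : ℂ)) / (2 * (Real.pi : ℂ))) ^ ((1 : ℂ)/2) *
    Complex.exp (Complex.I * ((u : ℂ)^2 / 2) * ((c : ℝ) : ℂ)) *
    Complex.exp (-(Complex.I * (t : ℂ) * (u : ℂ) * (((s : ℝ) : ℂ))⁻¹)
      + Complex.I * ((t : ℂ)^2 / 2) * ((c : ℝ) : ℂ))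

theorem frft_aux (c s : ℝ) (hs : 0 < s) (hcs : 1 + c ^ 2 = s⁻¹ ^ 2)
    (f : ℝ → ℂ) (hf_cont : Continuous f) (hf_int : Integrable f) (F : ℝ → ℂ)
    (hF : ∀ u : ℝ, F u = ∫ x : ℝ, f x * frftK c s x u) (hF_int : Integrable F) (t : ℝ) :
    (∫ u : ℝ, F u * frftK (-c) (-s) t u) = f t := by
  have hπ := Real.pi_pos
  have hs' : s ≠ 0 := hs.ne'
  have hπc : (π : ℂ) ≠ 0 := by exact_mod_cast hπ.ne'
  have hsc : (s : ℂ) ≠ 0 := by exact_mod_cast hs.ne'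
  have h2πs : 2 * π * s ≠ 0 := by positivity
  set z : ℂ := ((1 : ℂ) - Complex.I * (c : ℂ)) / (2 * (π : ℂ)) with hz
  set Cz : ℂ := z ^ ((1 : ℂ)/2) with hCz
  have hz2 : z = ((((2*π)⁻¹ : ℝ)) : ℂ) * (1 - Complex.I * (c : ℂ)) := by
    rw [hz]; push_cast; field_simp
  have hzre : 0 < z.re := by
    rw [hz2, Complex.re_ofReal_mul]
    simp [Complex.mul_re]
    positivity
  have hz0 : z ≠ 0 := by
    intro h; rw [h] at hzre; simp at hzre
  have harg : z.arg ≠ π := by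
    intro h; rw [Complex.arg_eq_pi_iff] at h; linarith [h.1]
  have habs : ‖z‖ = (2*π*s)⁻¹ := by
    rw [hz2, norm_mul, Complex.norm_real, Real.norm_eq_abs]
    have h1 : ‖(1 - Complex.I * (c : ℂ))‖ = s⁻¹ := by
      have h2 : ‖(1 - Complex.I * (c : ℂ))‖ = Real.sqrt (1 + c ^ 2) := by
        rw [Complex.norm_def]
        congr 1
        simp [Complex.normSq_apply]
        ring
      rw [h2, hcs, Real.sqrt_sq (by positivity)]
    rw [h1, abs_of_pos (by positivity)]
    field_simp
  have hCz0 : Cz ≠ 0 := by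
    rw [hCz]
    simp [Complex.cpow_eq_zero_iff, hz0]
  have hhalf : (starRingEnd ℂ) ((1 : ℂ)/2) = (1 : ℂ)/2 := by
    rw [map_div₀, map_one, map_ofNat (starRingEnd ℂ) 2]
  have hconj : ((1 : ℂ) - Complex.I * ((-c : ℝ) : ℂ)) / (2 * (π : ℂ)) = (starRingEnd ℂ) z := by
    rw [hz, map_div₀, map_mul, map_ofNat (starRingEnd ℂ) 2, Complex.conj_ofReal]
    rw [map_sub, map_one, map_mul, Complex.conj_I, Complex.conj_ofReal]
    push_cast
    ring
  have habsCz : ‖Cz‖ ^ 2 = ‖z‖ := by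
    rw [hCz, show ((1 : ℂ)/2) = (((1/2 : ℝ)) : ℂ) by norm_num, Complex.norm_cpow_real,
      ← Real.rpow_natCast (‖z‖ ^ ((1:ℝ)/2)) 2, ← Real.rpow_mul (norm_nonneg z)]
    norm_num
  have hCC : Cz * (((1 : ℂ) - Complex.I * ((-c : ℝ) : ℂ)) / (2 * (π : ℂ))) ^ ((1 : ℂ)/2)
      = ((((2*π*s)⁻¹ : ℝ)) : ℂ) := by
    rw [hconj, Complex.conj_cpow z _ harg, hhalf, ← hCz, Complex.mul_conj,
      Complex.normSq_eq_norm_sq, habsCz, habs]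
  -- the chirped function
  set g : ℝ → ℂ := fun x => f x * Complex.exp (Complex.I * ((x : ℂ)^2/2) * (c : ℂ)) with hg
  have hg_cont : Continuous g := by
    apply hf_cont.mul
    exact Complex.continuous_exp.comp (by fun_prop)
  have hnorm_aux : ∀ r : ℝ, ‖Complex.exp (Complex.I * ((r : ℂ)^2/2) * (c : ℂ))‖ = 1 := by
    intro r
    rw [show Complex.I * ((r : ℂ)^2/2) * (c : ℂ) = ((r^2/2*c : ℝ) : ℂ) * Complex.I by
      push_cast; ring, Complex.norm_exp_ofReal_mul_I]
  have hg_int : Integrable g := by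
    refine hf_int.mono hg_cont.aestronglyMeasurable (ae_of_all _ fun x => ?_)
    rw [hg]
    simp only [norm_mul, hnorm_aux, mul_one]
    exact le_rfl
  -- F in terms of the Fourier transform of g
  have hFu : ∀ u : ℝ, F u = Cz * Complex.exp (Complex.I * ((u : ℂ)^2/2) * (c : ℂ)) *
      𝓕 g (u / (2*π*s)) := by
    intro u
    rw [hF u, Real.fourier_real_eq_integral_exp_smul, ← integral_const_mul]
    refine integral_congr_ae (ae_of_all _ fun x => ?_)
    simp only [frftK, smul_eq_mul, hg]
    rw [show ((-2*π*x*(u/(2*π*s)) : ℝ) : ℂ) * Complex.I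
        = -(Complex.I * (x : ℂ) * (u : ℂ) * ((s : ℂ))⁻¹) by push_cast; field_simp,
      Complex.exp_add, ← hCz]
    ring
  -- integrability of 𝓕 g
  have h𝓕g_int : Integrable (𝓕 g) := by
    have h1 : (fun u : ℝ => 𝓕 g (u * (2*π*s)⁻¹))
        = fun u : ℝ => (Cz⁻¹ * Complex.exp (-(Complex.I * ((u : ℂ)^2/2) * (c : ℂ)))) * F u := by
      funext u
      rw [← div_eq_mul_inv, hFu u, Complex.exp_neg]
      have he := Complex.exp_ne_zero (Complex.I * ((u : ℂ)^2/2) * (c : ℂ))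
      field_simp
    have h2 : Integrable (fun u : ℝ => 𝓕 g (u * (2*π*s)⁻¹)) := by
      rw [h1]
      refine hF_int.bdd_mul (c := ‖Cz⁻¹‖) ?_ (ae_of_all _ fun u => ?_)
      · have hc1 : Continuous fun u : ℝ => Cz⁻¹ * Complex.exp (-(Complex.I * ((u : ℂ)^2/2) * (c : ℂ))) := by
          apply continuous_const.mul
          exact Complex.continuous_exp.comp (by fun_prop)
        exact hc1.aestronglyMeasurable
      · rw [norm_mul, show -(Complex.I * ((u : ℂ)^2/2) * (c : ℂ))
            = ((-(u^2/2*c) : ℝ) : ℂ) * Complex.I by push_cast; ring, Complex.norm_exp_ofReal_mul_I,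
          mul_one]
    exact (integrable_comp_mul_right_iff (𝓕 g) (inv_ne_zero h2πs)).1 h2
  have hinv : 𝓕⁻ (𝓕 g) t = g t := hg_int.fourierInv_fourier_eq h𝓕g_int hg_cont.continuousAt
  -- main computation
  set A : ℂ := Cz * (((1 : ℂ) - Complex.I * ((-c : ℝ) : ℂ)) / (2 * (π : ℂ))) ^ ((1 : ℂ)/2) *
      Complex.exp (-(Complex.I * ((t : ℂ)^2/2) * (c : ℂ))) with hA
  set H : ℝ → ℂ := fun v => Complex.exp (((-2*π*v*(-t) : ℝ) : ℂ) * Complex.I) • 𝓕 g v with hH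
  have hpt : ∀ u : ℝ, F u * frftK (-c) (-s) t u = A * H (u / (2*π*s)) := by
    intro u
    rw [hFu u]
    simp only [frftK, smul_eq_mul, hA, hH, ← hCz]
    have hexp2 : Complex.exp (Complex.I * ((u : ℂ)^2/2) * (c : ℂ)) *
        (Complex.exp (Complex.I * ((u : ℂ)^2/2) * ((-c : ℝ) : ℂ)) *
         Complex.exp (-(Complex.I * (t : ℂ) * (u : ℂ) * (((-s : ℝ) : ℂ))⁻¹)
            + Complex.I * ((t : ℂ)^2/2) * ((-c : ℝ) : ℂ)))
        = Complex.exp (-(Complex.I * ((t : ℂ)^2/2) * (c : ℂ))) *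
          Complex.exp (((-2*π*(u/(2*π*s))*(-t) : ℝ) : ℂ) * Complex.I) := by
      rw [← Complex.exp_add, ← Complex.exp_add, ← Complex.exp_add]
      congr 1
      push_cast
      field_simp
      ring
    linear_combination (Cz * (((1 : ℂ) - Complex.I * ((-c : ℝ) : ℂ)) / (2 * (π : ℂ))) ^ ((1 : ℂ)/2)
      * 𝓕 g (u / (2*π*s))) * hexp2
  calc (∫ u : ℝ, F u * frftK (-c) (-s) t u)
      = ∫ u : ℝ, A * H (u / (2*π*s)) := integral_congr_ae (ae_of_all _ hpt)
    _ = A * ∫ u : ℝ, H (u / (2*π*s)) := integral_const_mul _ _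
    _ = A * ((2*π*s) • ∫ v : ℝ, H v) := by
        rw [MeasureTheory.Measure.integral_comp_div H (2*π*s), abs_of_pos (by positivity)]
    _ = A * ((2*π*s) • (𝓕 (𝓕 g) (-t))) := by
        rw [Real.fourier_real_eq_integral_exp_smul]
    _ = A * ((2*π*s) • g t) := by
        rw [← Real.fourierInv_eq_fourier_neg, hinv]
    _ = f t := by
        rw [hA, hCC, hg]
        rw [Complex.real_smul]
        have : Complex.exp (-(Complex.I * ((t : ℂ)^2/2) * (c : ℂ))) *
            Complex.exp (Complex.I * ((t : ℂ)^2/2) * (c : ℂ)) = 1 := by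
          rw [← Complex.exp_add, neg_add_cancel, Complex.exp_zero]
        have h2 : ((2*π*s : ℝ) : ℂ) ≠ 0 := by exact_mod_cast h2πs
        have hinv2 : (((2*π*s : ℝ) : ℂ))⁻¹ * ((2*π*s : ℝ) : ℂ) = 1 := inv_mul_cancel₀ h2
        rw [Complex.ofReal_inv]
        linear_combination (f t * (((2*π*s : ℝ) : ℂ))⁻¹ * ((2*π*s : ℝ) : ℂ)) * this
          + (f t) * hinv2

/-- FRFT inversion formula: the inverse transform with kernel `K_{−α}` recovers a continuous
integrable function from its FRFT, provided the transform is itself integrable. -/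
theorem frft_inversion (α : ℝ) (hα : α ∈ Set.Ioo 0 (Real.pi / 2)) (f : ℝ → ℂ)
    (hf_cont : Continuous f) (hf_int : Integrable f) (F : ℝ → ℂ)
    (hF : ∀ u : ℝ, F u = ∫ t : ℝ, f t * frftKernel α t u)
    (hF_int : Integrable F) :
    ∀ t : ℝ, (∫ u : ℝ, F u * frftKernel (-α) t u) = f t := by
  intro t
  obtain ⟨hα0, hα2⟩ := hα
  have hπ := Real.pi_pos
  have hs : 0 < Real.sin α := Real.sin_pos_of_pos_of_lt_pi hα0 (by linarith)
  have hK : ∀ t u : ℝ, frftKernel α t u = frftK (Real.cos α / Real.sin α) (Real.sin α) t u :=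
    fun _ _ => rfl
  have hK' : ∀ t u : ℝ, frftKernel (-α) t u
      = frftK (-(Real.cos α / Real.sin α)) (-(Real.sin α)) t u := by
    intro t u
    simp only [frftKernel, frftK, Real.cos_neg, Real.sin_neg, div_neg]
  have hcs : 1 + (Real.cos α / Real.sin α) ^ 2 = (Real.sin α)⁻¹ ^ 2 := by
    field_simp
    exact Real.sin_sq_add_cos_sq α
  have := frft_aux (Real.cos α / Real.sin α) (Real.sin α) hs hcs f hf_cont hf_int F
    (fun u => by rw [hF u]; simp_rw [hK]) hF_int t
  rw [← this]
  refine integral_congr_ae (ae_of_all _ fun u => ?_)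
  show F u * frftKernel (-α) t u = F u * frftK (-(Real.cos α / Real.sin α)) (-(Real.sin α)) t u
  rw [hK']
end

section
/- (Orthonormality of the fractional Fourier series basis.) Let α ∈ (0, π/2), T > 0, and set t₀ = 2π·sin α / T. Define the basis functions φ_n : ℝ → ℂ for n ∈ ℤ by φ_n(t) = K_{−α}(t, n·t₀) / √(T·csc α/(2π)). Then for all integers n, m: ∫_{−T/2}^{T/2} φ_n(t)·conj(φ_m(t)) dt = 1 if n = m, and = 0 if n ≠ m. -/
open MeasureTheory Real Complex

private lemma aux_prod (A r1 a1 a2 b1 b2 : ℂ) :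
    A * Complex.exp a1 * Complex.exp a2 / r1 *
      ((starRingEnd ℂ) A * Complex.exp b1 * Complex.exp b2 / r1)
    = A * (starRingEnd ℂ) A / (r1 * r1) * Complex.exp (a1 + a2 + (b1 + b2)) := by
  rw [Complex.exp_add, Complex.exp_add, Complex.exp_add]; ring

/-- Orthonormality of the fractional Fourier series basis
`φ_n(t) = K_{−α}(t, n·t₀) / √(T·csc α/(2π))` with central fractional frequency
`t₀ = 2π·sin α / T`, on the interval `[−T/2, T/2]`. -/
theorem frfs_basis_orthonormal (α : ℝ) (hα : α ∈ Set.Ioo 0 (Real.pi / 2)) (T : ℝ)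
    (hT : 0 < T) (t₀ : ℝ) (ht₀ : t₀ = 2 * Real.pi * Real.sin α / T)
    (φ : ℤ → ℝ → ℂ)
    (hφ : ∀ (n : ℤ) (t : ℝ), φ n t =
      frftKernel (-α) t ((n : ℝ) * t₀) /
        ((Real.sqrt (T * (Real.sin α)⁻¹ / (2 * Real.pi)) : ℝ) : ℂ)) :
    ∀ n m : ℤ,
      (∫ t in (-(T/2))..(T/2), φ n t * (starRingEnd ℂ) (φ m t)) =
        if n = m then 1 else 0 := by
  obtain ⟨hα0, hα2⟩ := hα
  have hπ := Real.pi_pos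
  have hs : 0 < Real.sin α := Real.sin_pos_of_pos_of_lt_pi hα0 (by linarith)
  set q : ℝ := Real.cos α / Real.sin α with hqdef
  have hq : Real.cos α / -Real.sin α = -q := by rw [div_neg, hqdef]
  set r : ℝ := Real.sqrt (T * (Real.sin α)⁻¹ / (2 * Real.pi)) with hrdef
  have hrarg : 0 < T * (Real.sin α)⁻¹ / (2 * Real.pi) := by positivity
  have hrr : (r : ℂ) * (r : ℂ) = ((T * (Real.sin α)⁻¹ / (2 * Real.pi) : ℝ) : ℂ) := by
    rw [← Complex.ofReal_mul, Real.mul_self_sqrt hrarg.le]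
  set A : ℂ := (((1 : ℂ) + Complex.I * (q : ℂ)) / (2 * (Real.pi : ℂ))) ^ ((1 : ℂ)/2) with hAdef
  have hzabs : ‖(((1 : ℂ) + Complex.I * (q : ℂ)) / (2 * (Real.pi : ℂ)))‖
      = (Real.sin α)⁻¹ / (2 * Real.pi) := by
    rw [norm_div]
    have h1 : ‖(1 : ℂ) + Complex.I * (q : ℂ)‖ = (Real.sin α)⁻¹ := by
      rw [Complex.norm_def,
        show (1:ℂ) + Complex.I * (q : ℂ) = ((1:ℝ):ℂ) + ((q:ℝ):ℂ) * Complex.I by push_cast; try ring,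
        Complex.normSq_add_mul_I]
      have h2 : (1:ℝ) ^ 2 + q ^ 2 = ((Real.sin α)⁻¹) ^ 2 := by
        rw [hqdef]
        field_simp
        try linarith [Real.sin_sq_add_cos_sq α]
      rw [h2, Real.sqrt_sq (by positivity)]
    have h3 : ‖(2 * (Real.pi : ℂ))‖ = 2 * Real.pi := by
      rw [show (2 * (Real.pi : ℂ)) = ((2 * Real.pi : ℝ) : ℂ) by push_cast; try ring,
        Complex.norm_real, Real.norm_eq_abs, abs_of_pos (by positivity)]
    rw [h1, h3]
  have hzne : (((1 : ℂ) + Complex.I * (q : ℂ)) / (2 * (Real.pi : ℂ))) ≠ 0 := by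
    intro h
    rw [h, norm_zero] at hzabs
    have : (0:ℝ) < (Real.sin α)⁻¹ / (2 * Real.pi) := by positivity
    linarith [hzabs]
  have hAA : A * (starRingEnd ℂ) A = (((Real.sin α)⁻¹ / (2 * Real.pi) : ℝ) : ℂ) := by
    rw [Complex.mul_conj]
    congr 1
    rw [← Complex.sq_norm, hAdef,
      show ((1:ℂ)/2) = ((1/2 : ℝ) : ℂ) by norm_num,
      Complex.norm_cpow_of_ne_zero hzne]
    rw [Complex.ofReal_re, Complex.ofReal_im, mul_zero, Real.exp_zero, div_one, hzabs]
    rw [← Real.rpow_natCast _ 2, ← Real.rpow_mul (by positivity)]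
    norm_num
  have hsC : ((Real.sin α : ℝ) : ℂ) ≠ 0 := by exact_mod_cast hs.ne'
  have hTC : ((T : ℝ) : ℂ) ≠ 0 := by exact_mod_cast hT.ne'
  have hπC : ((Real.pi : ℝ) : ℂ) ≠ 0 := by exact_mod_cast hπ.ne'
  intro n m
  set D : ℂ := Complex.I * ((n : ℂ) - (m : ℂ)) * (2 * (Real.pi : ℂ) / (T : ℂ)) with hDdef
  set C : ℂ := Complex.I * (((m : ℂ)^2 - (n : ℂ)^2) * ((t₀ : ℝ) : ℂ)^2 / 2) * (q : ℂ) with hCdef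
  have key : ∀ t : ℝ, φ n t * (starRingEnd ℂ) (φ m t)
      = ((T : ℂ)⁻¹ * Complex.exp C) * Complex.exp (D * (t : ℂ)) := by
    intro t
    rw [hφ, hφ]
    simp only [frftKernel, Real.cos_neg, Real.sin_neg, hq, Complex.ofReal_neg, map_mul, map_div₀,
      Complex.conj_ofReal, ← Complex.exp_conj, map_add, map_neg, Complex.conj_I,
      map_pow, map_inv₀, map_ofNat, map_one]
    rw [show (1:ℂ) - Complex.I * -(q : ℂ) = 1 + Complex.I * (q : ℂ) by ring]
    rw [← hAdef, aux_prod, hAA, hrr]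
    have hsC2 : Complex.sin ((α : ℝ) : ℂ) ≠ 0 := by
      rw [← Complex.ofReal_sin]; exact_mod_cast hs.ne'
    have hcoeff : ((((Real.sin α)⁻¹ / (2 * Real.pi) : ℝ)) : ℂ) / ((T * (Real.sin α)⁻¹ / (2 * Real.pi) : ℝ) : ℂ)
        = (T : ℂ)⁻¹ := by
      push_cast
      field_simp [hsC2]
    rw [hcoeff, show ((T:ℂ))⁻¹ * Complex.exp C * Complex.exp (D * (t:ℂ))
      = ((T:ℂ))⁻¹ * Complex.exp (C + D * (t:ℂ)) by rw [Complex.exp_add]; ring]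
    congr 2
    rw [hCdef, hDdef, ht₀]
    push_cast
    field_simp [hsC2]
    ring
  by_cases hnm : n = m
  · subst hnm
    rw [if_pos rfl]
    have hD0 : D = 0 := by rw [hDdef]; ring
    have hC0 : C = 0 := by rw [hCdef]; ring
    simp only [key, hD0, hC0, Complex.exp_zero, mul_one, zero_mul]
    rw [intervalIntegral.integral_const]
    rw [sub_neg_eq_add, Complex.real_smul]
    push_cast
    field_simp
    try ring
  · rw [if_neg hnm]
    have hDne : D ≠ 0 := by
      rw [hDdef]
      exact mul_ne_zero (mul_ne_zero Complex.I_ne_zero (sub_ne_zero.mpr (by exact_mod_cast hnm)))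
        (div_ne_zero (mul_ne_zero two_ne_zero hπC) hTC)
    simp only [key]
    rw [intervalIntegral.integral_const_mul, integral_exp_mul_complex hDne]
    have h1 : Complex.exp (D * ((T/2 : ℝ) : ℂ))
        = Complex.exp (D * ((-(T/2) : ℝ) : ℂ)) * Complex.exp (((n - m : ℤ) : ℂ) * (2 * (Real.pi : ℂ) * Complex.I)) := by
      rw [← Complex.exp_add]
      congr 1
      rw [hDdef]
      push_cast
      field_simp
      ring
    rw [h1, Complex.exp_int_mul_two_pi_mul_I, mul_one, sub_self, zero_div, mul_zero]
end

section
/- (Propositions 3 and 4, essential content.) Let α ∈ (0, π/2) and let R : ℝ → ℂ be continuous. Define the FRFT-output autocorrelation function G : ℝ × ℝ → ℂ of a wide-sense-stationary input with autocorrelation R by G(u₁,u₂) = sec α · R(sec α·(u₁ − u₂)) · exp(i·(u₂² − u₁²)·tan α). If G is shift-invariant, i.e. G(u₁ + h, u₂ + h) = G(u₁, u₂) for all u₁, u₂, h ∈ ℝ, then R(τ) = 0 for every τ ≠ 0. Hence the FRFT output can be wide-sense stationary only if the input autocorrelation is supported at the origin, i.e. only for a white input process. -/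
open MeasureTheory Real Complex

/-- Propositions 3 and 4 (essential content): if the FRFT-output autocorrelation
`G(u₁,u₂) = sec α · R(sec α·(u₁ − u₂)) · exp(i·(u₂² − u₁²)·tan α)` of a wide-sense-stationary
input with continuous autocorrelation `R` is shift-invariant (as required for wide-sense
stationarity of the output), then `R` vanishes away from the origin, i.e. the input must be a
white process. -/
theorem frft_output_stationary_implies_white (α : ℝ) (hα : α ∈ Set.Ioo 0 (Real.pi / 2))
    (R : ℝ → ℂ) (hR : Continuous R) (G : ℝ → ℝ → ℂ)
    (hG : ∀ u₁ u₂ : ℝ, G u₁ u₂ =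
      (((Real.cos α)⁻¹ : ℝ) : ℂ) * R ((Real.cos α)⁻¹ * (u₁ - u₂)) *
        Complex.exp (Complex.I * ((u₂ : ℂ)^2 - (u₁ : ℂ)^2) * ((Real.tan α : ℝ) : ℂ)))
    (hshift : ∀ u₁ u₂ h : ℝ, G (u₁ + h) (u₂ + h) = G u₁ u₂) :
    ∀ τ : ℝ, τ ≠ 0 → R τ = 0 := by
  intro τ hτ
  obtain ⟨hα0, hα2⟩ := hα
  have hcos : 0 < Real.cos α :=
    Real.cos_pos_of_mem_Ioo ⟨by linarith [Real.pi_pos], hα2⟩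
  have htan : 0 < Real.tan α := Real.tan_pos_of_pos_of_lt_pi_div_two hα0 hα2
  set t := Real.tan α with ht
  set u₁ := τ * Real.cos α with hu₁def
  have hu₁ : u₁ ≠ 0 := mul_ne_zero hτ hcos.ne'
  set h := Real.pi / (2 * u₁ * t) with hhdef
  have key := hshift u₁ 0 h
  rw [hG, hG] at key
  have harg1 : (Real.cos α)⁻¹ * (u₁ + h - (0 + h)) = τ := by
    rw [hu₁def]; field_simp; ring
  have harg2 : (Real.cos α)⁻¹ * (u₁ - 0) = τ := by
    rw [hu₁def]; field_simp; ring
  rw [harg1, harg2] at key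
  by_contra hne
  have hc : (((Real.cos α)⁻¹ : ℝ) : ℂ) ≠ 0 := by
    exact Complex.ofReal_ne_zero.mpr (inv_ne_zero hcos.ne')
  have hne' : (((Real.cos α)⁻¹ : ℝ) : ℂ) * R τ ≠ 0 := mul_ne_zero hc hne
  have hE := mul_left_cancel₀ hne' key
  have hreal : 2 * u₁ * h * t = Real.pi := by
    rw [hhdef]; field_simp
  have hC : ((2 * u₁ * h * t : ℝ) : ℂ) = (Real.pi : ℂ) := by exact_mod_cast hreal
  have hAB : Complex.I * (((0 + h : ℝ) : ℂ)^2 - ((u₁ + h : ℝ) : ℂ)^2) * ((t : ℝ) : ℂ)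
      - Complex.I * (((0 : ℝ) : ℂ)^2 - ((u₁ : ℝ) : ℂ)^2) * ((t : ℝ) : ℂ)
      = -(Real.pi * Complex.I) := by
    push_cast at hC ⊢
    linear_combination (-Complex.I) * hC
  have hone : Complex.exp (Complex.I * (((0 + h : ℝ) : ℂ)^2 - ((u₁ + h : ℝ) : ℂ)^2) * ((t : ℝ) : ℂ)
      - Complex.I * (((0 : ℝ) : ℂ)^2 - ((u₁ : ℝ) : ℂ)^2) * ((t : ℝ) : ℂ)) = 1 := by
    rw [Complex.exp_sub, hE, div_self (Complex.exp_ne_zero _)]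
  rw [hAB, Complex.exp_neg, Complex.exp_pi_mul_I] at hone
  norm_num at hone
end
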